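/- Let S be a Hausdorff countably compact topological semigroup. Then the Clifford part H(S) is sequentially closed in S. -/

import Mathlib

open Filter Topology

variable {S : Type*}

/-- `spow x n` is `x ^ n` for `n ≥ 1` in a semigroup (with junk value `x` at `0`). -/
def spow {S : Type*} [Mul S] (x : S) : ℕ → S
  | 0 => x
  | 1 => x
  | n + 2 => spow x (n + 1) * x

/-- An element of a topological semigroup is topologically periodic if every open
neighbourhood of `x` contains `x ^ n` for some `n ≥ 2`. -/
def TopPeriodic {S : Type*} [Mul S] [TopologicalSpace S] (x : S) : Prop :=
  ∀ U : Set S, IsOpen U → x ∈ U → ∃ n : ℕ, 2 ≤ n ∧ spow x n ∈ U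

/-- The Clifford part `H(S)` of a semigroup: the union of all maximal subgroups. -/
def HSet (S : Type*) [Mul S] : Set S :=
  {x | ∃ y, x * y = y * x ∧ x * y * x = x ∧ y * x * y = y}

/-- The maximal subgroup `H(e)` of a semigroup with identity the idempotent `e`. -/
def Hgrp (S : Type*) [Mul S] (e : S) : Set S :=
  {x | ∃ y, x * y = e ∧ y * x = e ∧ x * e = x ∧ e * x = x ∧ y * e = y ∧ e * y = y}

/-- `inv` is the inversion map on the Clifford part `H(S)`: it sends each element of a
maximal subgroup to its (unique) commuting inverse. -/
def IsInvMap (S : Type*) [Mul S] (inv : S → S) : Prop :=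
  ∀ x ∈ HSet S, x * inv x = inv x * x ∧ x * inv x * x = x ∧ inv x * x * inv x = inv x

/-- A topological space is countably compact if every countable open cover admits a
finite subcover. -/
def CountablyCompactSpace' (X : Type*) [TopologicalSpace X] : Prop :=
  ∀ U : ℕ → Set X, (∀ n, IsOpen (U n)) → (⋃ n, U n) = Set.univ →
    ∃ F : Finset ℕ, (⋃ n ∈ F, U n) = Set.univ

/-- A subset of a topological space is countably compact (as a subspace) if every
countable cover by open sets of the ambient space admits a finite subcover. -/
def CountablyCompactIn {X : Type*} [TopologicalSpace X] (A : Set X) : Prop :=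
  ∀ U : ℕ → Set X, (∀ n, IsOpen (U n)) → A ⊆ ⋃ n, U n →
    ∃ F : Finset ℕ, A ⊆ ⋃ n ∈ F, U n

/-- A topological space is pseudocompact if every continuous real-valued function on it
is bounded. -/
def Pseudocompact (X : Type*) [TopologicalSpace X] : Prop :=
  ∀ f : X → ℝ, Continuous f → ∃ M : ℝ, ∀ x, |f x| ≤ M

/-- Every sequence in a countably compact space has a cluster point. -/
lemma exists_clusterPt_of_ccs {X : Type*} [TopologicalSpace X]
    (hcc : CountablyCompactSpace' X) (y : ℕ → X) : ∃ s : X, MapClusterPt s atTop y := by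
  by_contra h
  push_neg at h
  -- For each `k`, let `W k` be the union of all open sets avoiding the tail `y n`, `n ≥ k`.
  set W : ℕ → Set X := fun k => ⋃₀ {O : Set X | IsOpen O ∧ ∀ n ≥ k, y n ∉ O} with hW
  have hWopen : ∀ k, IsOpen (W k) := fun k =>
    isOpen_sUnion (fun O hO => hO.1)
  have hWcover : (⋃ k, W k) = Set.univ := by
    apply Set.eq_univ_of_forall
    intro s
    have hs := h s
    rw [MapClusterPt, clusterPt_iff_nonempty] at hs
    push_neg at hs
    obtain ⟨U, hU, V, hV, hUV⟩ := hs
    obtain ⟨O, hOopen, hsO, hOU⟩ : ∃ O, IsOpen O ∧ s ∈ O ∧ O ⊆ U := by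
      rcases mem_nhds_iff.1 hU with ⟨O, hOU, hOopen, hsO⟩
      exact ⟨O, hOopen, hsO, hOU⟩
    rw [mem_map, mem_atTop_sets] at hV
    obtain ⟨k, hk⟩ := hV
    refine Set.mem_iUnion.2 ⟨k, Set.mem_sUnion.2 ⟨O, ⟨hOopen, ?_⟩, hsO⟩⟩
    intro n hn hyn
    exact Set.not_nonempty_iff_eq_empty.2 hUV ⟨y n, hOU hyn, hk n hn⟩
  obtain ⟨F, hF⟩ := hcc W hWopen hWcover
  set m : ℕ := F.sup id with hm
  have : y m ∈ ⋃ k ∈ F, W k := hF ▸ Set.mem_univ _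
  rw [Set.mem_iUnion₂] at this
  obtain ⟨k, hkF, hyk⟩ := this
  obtain ⟨O, ⟨hOopen, hOtail⟩, hymO⟩ := Set.mem_sUnion.1 hyk
  exact hOtail m (Finset.le_sup (f := id) hkF) hymO

theorem stmt11 [Semigroup S] [TopologicalSpace S] [ContinuousMul S] [T2Space S]
    (hcc : CountablyCompactSpace' S) :
    IsSeqClosed (HSet S) := by
  intro u x hu hx
  -- choose inverses
  choose y hcomm hxyx hyxy using hu
  obtain ⟨c, hc⟩ := exists_clusterPt_of_ccs hcc y
  rw [mapClusterPt_iff_ultrafilter] at hc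
  obtain ⟨𝒰, h𝒰, hy⟩ := hc
  have hx' : Tendsto u (𝒰 : Filter ℕ) (𝓝 x) := hx.mono_left h𝒰
  refine ⟨c, ?_, ?_, ?_⟩
  · have h1 : Tendsto (fun n => u n * y n) (𝒰 : Filter ℕ) (𝓝 (x * c)) := hx'.mul hy
    have h2 : Tendsto (fun n => u n * y n) (𝒰 : Filter ℕ) (𝓝 (c * x)) := by
      have := hy.mul hx'
      exact this.congr fun n => (hcomm n).symm
    exact tendsto_nhds_unique h1 h2
  · have h1 : Tendsto (fun n => u n * y n * u n) (𝒰 : Filter ℕ) (𝓝 (x * c * x)) :=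
      (hx'.mul hy).mul hx'
    have h2 : Tendsto (fun n => u n * y n * u n) (𝒰 : Filter ℕ) (𝓝 x) :=
      hx'.congr fun n => (hxyx n).symm
    exact tendsto_nhds_unique h1 h2
  · have h1 : Tendsto (fun n => y n * u n * y n) (𝒰 : Filter ℕ) (𝓝 (c * x * c)) :=
      (hy.mul hx').mul hy
    have h2 : Tendsto (fun n => y n * u n * y n) (𝒰 : Filter ℕ) (𝓝 c) :=
      hy.congr fun n => (hyxy n).symm
    exact tendsto_nhds_unique h1 h2
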